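/- Let B₁, B₂, B₃ be positive real numbers, let B̂₁, B̂₂, B̂₃ ∈ [0, π] satisfy cos B̂ⱼ = cos Bⱼ for j = 1, 2, 3 and B̂₁ ≤ B̂₂ ≤ B̂₃. Define B'₁ = B̂₁, and for j = 2, 3 define B'ⱼ = B̂ⱼ if B̂₂ + B̂₃ ≤ π and B'ⱼ = π − B̂ⱼ if B̂₂ + B̂₃ > π. Then cos²B₁ + cos²B₂ + cos²B₃ + 2·cos B₁·cos B₂·cos B₃ < 1 if and only if B'₁ + B'₂ + B'₃ > π. -/

import Mathlib

set_option maxHeartbeats 800000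


theorem irreducibility_iff_normalized_sum_gt_pi (B1 B2 B3 : ℝ)
    (hB1 : 0 < B1) (hB2 : 0 < B2) (hB3 : 0 < B3)
    (Bh1 Bh2 Bh3 : ℝ)
    (hh1 : Bh1 ∈ Set.Icc 0 Real.pi) (hh2 : Bh2 ∈ Set.Icc 0 Real.pi)
    (hh3 : Bh3 ∈ Set.Icc 0 Real.pi)
    (hc1 : Real.cos Bh1 = Real.cos B1) (hc2 : Real.cos Bh2 = Real.cos B2)
    (hc3 : Real.cos Bh3 = Real.cos B3)
    (hord12 : Bh1 ≤ Bh2) (hord23 : Bh2 ≤ Bh3) :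
    let B1' := Bh1
    let B2' := if Bh2 + Bh3 ≤ Real.pi then Bh2 else Real.pi - Bh2
    let B3' := if Bh2 + Bh3 ≤ Real.pi then Bh3 else Real.pi - Bh3
    (Real.cos B1 ^ 2 + Real.cos B2 ^ 2 + Real.cos B3 ^ 2
      + 2 * Real.cos B1 * Real.cos B2 * Real.cos B3 < 1 ↔
    B1' + B2' + B3' > Real.pi) := by
  intro B1' B2' B3'
  obtain ⟨h10, h1p⟩ := hh1
  obtain ⟨h20, h2p⟩ := hh2
  obtain ⟨h30, h3p⟩ := hh3
  have hpi := Real.pi_pos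
  rw [← hc1, ← hc2, ← hc3]
  set a := Bh1 with ha
  set b := Bh2 with hb
  set c := Bh3 with hc
  set u := Real.cos ((a + b + c) / 2) with hu
  set v := Real.cos ((b + c - a) / 2) with hv
  set w := Real.cos ((a + b - c) / 2) with hw
  set t := Real.cos ((a - b + c) / 2) with ht
  have e1 : Real.cos a + Real.cos (b + c) = 2 * u * v := by
    rw [hu, hv, Real.cos_add_cos, show (a + (b + c)) / 2 = (a + b + c) / 2 by ring,
      show (a - (b + c)) / 2 = -((b + c - a) / 2) by ring, Real.cos_neg]
  have e2 : Real.cos a + Real.cos (b - c) = 2 * w * t := by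
    rw [hw, ht, Real.cos_add_cos, show (a + (b - c)) / 2 = (a + b - c) / 2 by ring,
      show (a - (b - c)) / 2 = (a - b + c) / 2 by ring]
  have key : Real.cos a ^ 2 + Real.cos b ^ 2 + Real.cos c ^ 2
      + 2 * Real.cos a * Real.cos b * Real.cos c - 1 = 4 * (u * v * (w * t)) := by
    have hsb := Real.sin_sq_add_cos_sq b
    have hsc := Real.sin_sq_add_cos_sq c
    have expand : (Real.cos a + Real.cos (b + c)) * (Real.cos a + Real.cos (b - c))
        = Real.cos a ^ 2 + Real.cos b ^ 2 + Real.cos c ^ 2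
          + 2 * Real.cos a * Real.cos b * Real.cos c - 1 := by
      rw [Real.cos_add, Real.cos_sub]
      linear_combination (-(Real.sin c ^ 2)) * hsb + (Real.cos b ^ 2 - 1) * hsc
    rw [← expand, e1, e2]; ring
  have hPhi : (Real.cos a ^ 2 + Real.cos b ^ 2 + Real.cos c ^ 2
      + 2 * Real.cos a * Real.cos b * Real.cos c < 1) ↔ u * v * (w * t) < 0 := by
    constructor <;> intro h <;> linarith [key]
  have hw0 : 0 ≤ w := Real.cos_nonneg_of_mem_Icc ⟨by linarith, by linarith⟩
  have ht0 : 0 ≤ t := Real.cos_nonneg_of_mem_Icc ⟨by linarith, by linarith⟩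
  rw [hPhi]
  by_cases hcase : b + c ≤ Real.pi
  · simp only [B1', B2', B3', if_pos (show Bh2 + Bh3 ≤ Real.pi from hcase)]
    constructor
    · intro hprod
      have hv0 : 0 ≤ v := Real.cos_nonneg_of_mem_Icc ⟨by linarith, by linarith⟩
      have hu0 : u < 0 := by
        by_contra hu0
        push_neg at hu0
        have h1 : 0 ≤ v * (w * t) := mul_nonneg hv0 (mul_nonneg hw0 ht0)
        have h2 : 0 ≤ u * (v * (w * t)) := mul_nonneg hu0 h1
        rw [← mul_assoc] at h2
        linarith
      by_contra hs
      push_neg at hs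
      have : 0 ≤ u := Real.cos_nonneg_of_mem_Icc ⟨by linarith, by linarith⟩
      linarith
    · intro hs
      have hbpos : 0 < b := by linarith
      have hun : u < 0 :=
        Real.cos_neg_of_pi_div_two_lt_of_lt (by linarith) (by linarith)
      have hvp : 0 < v := Real.cos_pos_of_mem_Ioo ⟨by linarith, by linarith⟩
      have hwp : 0 < w := Real.cos_pos_of_mem_Ioo ⟨by linarith, by linarith⟩
      have htp : 0 < t := Real.cos_pos_of_mem_Ioo ⟨by linarith, by linarith⟩
      rw [mul_assoc]
      exact mul_neg_of_neg_of_pos hun (mul_pos hvp (mul_pos hwp htp))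
  · push_neg at hcase
    simp only [B1', B2', B3', if_neg (show ¬(Bh2 + Bh3 ≤ Real.pi) from not_le.mpr hcase)]
    constructor
    · intro hprod
      by_contra hs
      push_neg at hs
      have hba : Real.pi ≤ b + c - a := by linarith
      have hv0 : v ≤ 0 :=
        Real.cos_nonpos_of_pi_div_two_le_of_le (by linarith) (by linarith)
      have hu0 : u ≤ 0 :=
        Real.cos_nonpos_of_pi_div_two_le_of_le (by linarith) (by linarith)
      have huv : 0 ≤ u * v := by nlinarith [hu0, hv0]
      have h2 : 0 ≤ u * v * (w * t) := mul_nonneg huv (mul_nonneg hw0 ht0)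
      linarith
    · intro hs
      have hba : b + c - a < Real.pi := by linarith
      have hvp : 0 < v := Real.cos_pos_of_mem_Ioo ⟨by linarith, by linarith⟩
      have hun : u < 0 :=
        Real.cos_neg_of_pi_div_two_lt_of_lt (by linarith) (by linarith)
      have hwp : 0 < w := Real.cos_pos_of_mem_Ioo ⟨by linarith, by linarith⟩
      have htp : 0 < t := Real.cos_pos_of_mem_Ioo ⟨by linarith, by linarith⟩
      rw [mul_assoc]
      exact mul_neg_of_neg_of_pos hun (mul_pos hvp (mul_pos hwp htp))
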